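/- For every integer n ≥ 3, the strong colour graph S_3(C_n) of the cycle on n vertices is not connected. -/

import Mathlib

/-- A strong `k`-colouring of `G`: a proper colouring using all `k` colours. -/
def IsStrongColoring {V : Type*} {k : ℕ} (G : SimpleGraph V) (α : V → Fin k) : Prop :=
  (∀ ⦃u v⦄, G.Adj u v → α u ≠ α v) ∧ Function.Surjective α

/-- The strong `k`-colour graph `S_k(G)`: vertices are strong `k`-colourings,
two colourings adjacent iff they differ on exactly one vertex. -/
def strongColorGraph {V : Type*} (G : SimpleGraph V) (k : ℕ) :
    SimpleGraph {α : V → Fin k // IsStrongColoring G α} where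
  Adj α β := ∃! v, α.1 v ≠ β.1 v
  symm := by
    refine ⟨?_⟩
    rintro a b ⟨v, hv, hu⟩
    exact ⟨v, hv.symm, fun w hw => hu w hw.symm⟩
  loopless := by
    refine ⟨?_⟩
    rintro a ⟨v, hv, -⟩
    exact hv rfl

namespace StrongColorAux

/-- The "direction" of a step between two colours. -/
def dd (a b : Fin 3) : ℤ :=
  if (b.val + 3 - a.val) % 3 = 1 then 1
  else if (b.val + 3 - a.val) % 3 = 2 then -1 else 0

lemma dd_cancel : ∀ a b : Fin 3, a ≠ b → dd a b + dd b a = 0 := by decide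

lemma forced : ∀ a b x y : Fin 3, x ≠ a → x ≠ b → y ≠ a → y ≠ b → x ≠ y → a = b := by decide

lemma dd_neg : ∀ a b : Fin 3, dd (-a) (-b) = - dd a b := by decide

/-- Winding number of a colouring of the cycle. -/
def W {m : ℕ} (α : Fin (m+3) → Fin 3) : ℤ := ∑ i : Fin (m+3), dd (α i) (α (i + 1))

lemma adj_succ (m : ℕ) (u : Fin (m+3)) :
    (SimpleGraph.cycleGraph (m+3)).Adj u (u+1) := by
  have h : (u + 1) - u = 1 := add_sub_cancel_left u 1
  exact SimpleGraph.cycleGraph_adj.mpr (Or.inr h)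

lemma W_eq_of_adj {m : ℕ}
    {a b : {α : Fin (m+3) → Fin 3 // IsStrongColoring (SimpleGraph.cycleGraph (m+3)) α}}
    (h : (strongColorGraph (SimpleGraph.cycleGraph (m+3)) 3).Adj a b) :
    W a.1 = W b.1 := by
  obtain ⟨v, hv, huniq⟩ := h
  have key : ∀ w, w ≠ v → a.1 w = b.1 w := by
    intro w hw
    by_contra hne
    exact hw (huniq w hne)
  have h1ne0 : (1 : Fin (m+3)) ≠ 0 := by
    simp [Fin.ext_iff]
  have hv1 : v - 1 ≠ v := fun h => h1ne0 (sub_eq_self.mp h)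
  have hv2 : v + 1 ≠ v := fun h => h1ne0 (by
    have h' := congrArg (· - v) h
    simpa [add_sub_cancel_left, sub_self] using h')
  have hsub : v - 1 + 1 = v := sub_add_cancel v 1
  have hA : a.1 (v-1) = b.1 (v-1) := key _ hv1
  have hB : a.1 (v+1) = b.1 (v+1) := key _ hv2
  have hadjprev : (SimpleGraph.cycleGraph (m+3)).Adj (v-1) v := by
    have h' := adj_succ m (v-1); rwa [hsub] at h'
  have hadjnext := adj_succ m v
  have hxa : a.1 v ≠ a.1 (v-1) := fun h => a.2.1 hadjprev h.symm
  have hxb : a.1 v ≠ a.1 (v+1) := a.2.1 hadjnext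
  have hya : b.1 v ≠ a.1 (v-1) := by rw [hA]; exact fun h => b.2.1 hadjprev h.symm
  have hyb : b.1 v ≠ a.1 (v+1) := by rw [hB]; exact b.2.1 hadjnext
  have hmid : a.1 (v-1) = a.1 (v+1) := forced _ _ _ _ hxa hxb hya hyb hv
  have hdiff : ∀ i : Fin (m+3), i ∉ ({v-1, v} : Finset (Fin (m+3))) →
      dd (a.1 i) (a.1 (i+1)) - dd (b.1 i) (b.1 (i+1)) = 0 := by
    intro i hi
    simp only [Finset.mem_insert, Finset.mem_singleton, not_or] at hi
    have h1 : a.1 i = b.1 i := key i hi.2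
    have h2 : a.1 (i+1) = b.1 (i+1) := key _ (fun h => hi.1 (eq_sub_of_add_eq h))
    rw [h1, h2, sub_self]
  have hzero : ∑ i : Fin (m+3), (dd (a.1 i) (a.1 (i+1)) - dd (b.1 i) (b.1 (i+1))) = 0 := by
    rw [← Finset.sum_subset (Finset.subset_univ ({v-1, v} : Finset (Fin (m+3))))
      (fun i _ hi => hdiff i hi)]
    rw [Finset.sum_pair hv1, hsub]
    have e1 : b.1 (v-1) = a.1 (v-1) := hA.symm
    have e2 : a.1 (v+1) = a.1 (v-1) := hmid.symm
    have e3 : b.1 (v+1) = a.1 (v-1) := hB.symm.trans hmid.symm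
    rw [e1, e2, e3]
    have c1 := dd_cancel (a.1 (v-1)) (a.1 v) (Ne.symm hxa)
    have c2 := dd_cancel (a.1 (v-1)) (b.1 v) (Ne.symm hya)
    linarith
  have hsum : W a.1 - W b.1 = ∑ i : Fin (m+3),
      (dd (a.1 i) (a.1 (i+1)) - dd (b.1 i) (b.1 (i+1))) := by
    unfold W
    rw [Finset.sum_sub_distrib]
  omega

lemma W_eq_of_reachable {m : ℕ}
    {a b : {α : Fin (m+3) → Fin 3 // IsStrongColoring (SimpleGraph.cycleGraph (m+3)) α}}
    (h : (strongColorGraph (SimpleGraph.cycleGraph (m+3)) 3).Reachable a b) :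
    W a.1 = W b.1 := by
  obtain ⟨p⟩ := h
  induction p with
  | nil => rfl
  | cons hadj p ih => exact (W_eq_of_adj hadj).trans ih

/-- The base colouring. -/
def A (m : ℕ) : Fin (m+3) → Fin 3 :=
  fun i => ⟨if (m+3) % 3 = 1 ∧ i.val = m+2 then 1 else i.val % 3, by split <;> omega⟩

lemma A_val (m : ℕ) (i : Fin (m+3)) :
    (A m i).val = if (m+3) % 3 = 1 ∧ i.val = m+2 then 1 else i.val % 3 := rfl

lemma succ_val (m : ℕ) (i : Fin (m+3)) :
    (i + 1).val = if i.val = m + 2 then 0 else i.val + 1 := by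
  have h : (i + 1).val = (i.val + 1) % (m+3) := by
    rw [Fin.val_add, Fin.val_one]
  rw [h]
  have hlt := i.isLt
  split
  · next he => rw [he]; exact Nat.mod_self (m+3)
  · next he => exact Nat.mod_eq_of_lt (by omega)

lemma A_ne_succ (m : ℕ) (u : Fin (m+3)) : A m u ≠ A m (u + 1) := by
  intro h
  rw [Fin.ext_iff, A_val, A_val, succ_val] at h
  have hlt := u.isLt
  split_ifs at h <;> first | omega | simp_all

lemma A_strong (m : ℕ) : IsStrongColoring (SimpleGraph.cycleGraph (m+3)) (A m) := by
  constructor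
  · have key : ∀ u v : Fin (m+3), (u - v).val = 1 → u = v + 1 := by
      intro u v h
      have h' : u - v = 1 := Fin.ext_iff.mpr (by rw [h, Fin.val_one])
      exact (eq_add_of_sub_eq h').trans (add_comm 1 v)
    intro u v huv
    rcases SimpleGraph.cycleGraph_adj'.mp huv with h | h
    · rw [key u v h]
      exact (A_ne_succ m v).symm
    · rw [key v u h]
      exact A_ne_succ m u
  · intro c
    have hc := c.isLt
    refine ⟨⟨c.val, by omega⟩, ?_⟩
    rw [Fin.ext_iff, A_val, Fin.val_mk]
    split_ifs <;> omega

lemma A_term (m : ℕ) (i : Fin (m+3)) :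
    dd (A m i) (A m (i+1)) =
      1 + (if i.val = m+2 ∧ (m+3) % 3 ≠ 0 then -2 else 0)
        + (if (m+3) % 3 = 1 ∧ i.val = m+1 then -2 else 0) := by
  have hlt := i.isLt
  unfold dd
  rw [A_val, A_val, succ_val]
  split_ifs <;> first | omega | simp_all

lemma sum_indicator (m t : ℕ) (ht : t < m+3) :
    ∑ i : Fin (m+3), (if i.val = t then (-2:ℤ) else 0) = -2 := by
  rw [Finset.sum_eq_single (⟨t, ht⟩ : Fin (m+3))]
  · simp
  · intro b _ hb
    exact if_neg (fun h => hb (Fin.ext h))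
  · intro h; exact absurd (Finset.mem_univ _) h

lemma W_A_ne (m : ℕ) (hm : m ≠ 1) : W (A m) ≠ 0 := by
  have h3 : (m+3) % 3 = 0 ∨ (m+3) % 3 = 1 ∨ (m+3) % 3 = 2 := by omega
  have base : W (A m) = ∑ i : Fin (m+3),
      (1 + (if i.val = m+2 ∧ (m+3) % 3 ≠ 0 then (-2:ℤ) else 0)
        + (if (m+3) % 3 = 1 ∧ i.val = m+1 then (-2:ℤ) else 0)) := by
    unfold W
    exact Finset.sum_congr rfl (fun i _ => A_term m i)
  have hone : ∑ _i : Fin (m+3), (1:ℤ) = ((m+3 : ℕ) : ℤ) := by simp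
  rcases h3 with h3 | h3 | h3
  · rw [base]
    have hterm : ∀ i : Fin (m+3),
        (1 + (if i.val = m+2 ∧ (m+3) % 3 ≠ 0 then (-2:ℤ) else 0)
          + (if (m+3) % 3 = 1 ∧ i.val = m+1 then (-2:ℤ) else 0)) = 1 := by
      intro i; simp [h3]
    rw [Finset.sum_congr rfl (fun i _ => hterm i), hone]
    omega
  · rw [base]
    have hterm : ∀ i : Fin (m+3),
        (1 + (if i.val = m+2 ∧ (m+3) % 3 ≠ 0 then (-2:ℤ) else 0)
          + (if (m+3) % 3 = 1 ∧ i.val = m+1 then (-2:ℤ) else 0))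
        = 1 + (if i.val = m+2 then (-2:ℤ) else 0) + (if i.val = m+1 then (-2:ℤ) else 0) := by
      intro i; simp [h3]
    rw [Finset.sum_congr rfl (fun i _ => hterm i), Finset.sum_add_distrib,
      Finset.sum_add_distrib, hone, sum_indicator m (m+2) (by omega),
      sum_indicator m (m+1) (by omega)]
    omega
  · rw [base]
    have hterm : ∀ i : Fin (m+3),
        (1 + (if i.val = m+2 ∧ (m+3) % 3 ≠ 0 then (-2:ℤ) else 0)
          + (if (m+3) % 3 = 1 ∧ i.val = m+1 then (-2:ℤ) else 0))
        = 1 + (if i.val = m+2 then (-2:ℤ) else 0) := by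
      intro i; simp [h3]
    rw [Finset.sum_congr rfl (fun i _ => hterm i), Finset.sum_add_distrib, hone,
      sum_indicator m (m+2) (by omega)]
    omega

/-- The mirrored colouring. -/
def B (m : ℕ) : Fin (m+3) → Fin 3 := fun i => - A m i

lemma B_strong (m : ℕ) : IsStrongColoring (SimpleGraph.cycleGraph (m+3)) (B m) := by
  obtain ⟨h1, h2⟩ := A_strong m
  constructor
  · intro u v huv h
    exact h1 huv (neg_inj.mp h)
  · intro c
    obtain ⟨i, hi⟩ := h2 (-c)
    exact ⟨i, by simp only [B]; rw [hi, neg_neg]⟩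

lemma W_B (m : ℕ) : W (B m) = - W (A m) := by
  simp only [W, B]
  rw [← Finset.sum_neg_distrib]
  exact Finset.sum_congr rfl (fun i _ => dd_neg _ _)

instance dec4 : DecidablePred (IsStrongColoring (SimpleGraph.cycleGraph 4) :
    (Fin 4 → Fin 3) → Prop) :=
  fun β => inferInstanceAs (Decidable
    ((∀ ⦃u v⦄, (SimpleGraph.cycleGraph 4).Adj u v → β u ≠ β v) ∧ Function.Surjective β))

lemma key4 : ∀ β : Fin 4 → Fin 3, IsStrongColoring (SimpleGraph.cycleGraph 4) β →
    ¬ ∃ v, ((![0,1,0,2] : Fin 4 → Fin 3) v ≠ β v ∧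
      ∀ w, (![0,1,0,2] : Fin 4 → Fin 3) w ≠ β w → w = v) := by decide

lemma case4 : ¬(strongColorGraph (SimpleGraph.cycleGraph 4) 3).Connected := by
  intro h
  have ha : IsStrongColoring (SimpleGraph.cycleGraph 4) (![0,1,0,2] : Fin 4 → Fin 3) := by decide
  have hb : IsStrongColoring (SimpleGraph.cycleGraph 4) (![1,0,1,2] : Fin 4 → Fin 3) := by decide
  have hne : (⟨(![0,1,0,2] : Fin 4 → Fin 3), ha⟩ :
        {α : Fin 4 → Fin 3 // IsStrongColoring (SimpleGraph.cycleGraph 4) α})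
      ≠ ⟨(![1,0,1,2] : Fin 4 → Fin 3), hb⟩ := by
    intro h
    have h0 := congrFun (congrArg Subtype.val h) 0
    simp at h0
  obtain ⟨p⟩ := h.preconnected ⟨(![0,1,0,2] : Fin 4 → Fin 3), ha⟩
    ⟨(![1,0,1,2] : Fin 4 → Fin 3), hb⟩
  have hnil : ¬ p.Nil := SimpleGraph.Walk.not_nil_of_ne hne
  have hadj := SimpleGraph.Walk.adj_snd hnil
  exact key4 (p.getVert 1).1 (p.getVert 1).2 hadj

set_option maxHeartbeats 1000000 in
lemma general_case (m : ℕ) (hm : m ≠ 1) :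
    ¬(strongColorGraph (SimpleGraph.cycleGraph (m+3)) 3).Connected := by
  intro hconn
  have hr := hconn.preconnected ⟨StrongColorAux.A m, StrongColorAux.A_strong m⟩
    ⟨StrongColorAux.B m, StrongColorAux.B_strong m⟩
  have h1 : StrongColorAux.W (StrongColorAux.A m) = StrongColorAux.W (StrongColorAux.B m) :=
    StrongColorAux.W_eq_of_reachable hr
  rw [StrongColorAux.W_B] at h1
  have h2 := StrongColorAux.W_A_ne m hm
  omega

end StrongColorAux

/-- For every `n ≥ 3`, the strong colour graph `S_3(C_n)` is not connected. -/
theorem strongColorGraph_cycleGraph_three_not_connected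
    {n : ℕ} (hn : 3 ≤ n) :
    ¬(strongColorGraph (SimpleGraph.cycleGraph n) 3).Connected := by
  obtain ⟨m, rfl⟩ : ∃ m, n = m + 3 := ⟨n - 3, by omega⟩
  by_cases hm : m = 1
  · subst hm
    exact StrongColorAux.case4
  · exact StrongColorAux.general_case m hm
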